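/- For all x, y ∈ M₀ one has lim_{n→∞} ‖[F_n(x), F_n(y)] − |I_n|^{−1} ∑_{j∈I_n} γ_j(c)‖ = 0, where c := ∑_{l∈ℤ} [x, γ_l(y)] (a sum with only finitely many nonzero terms). -/
import Mathlib


open Filter Topology

open scoped ComplexOrder

/-- The local fluctuation `F_{I_n}(x)` of `x` over the interval `I_n = [ia n, ib n]`. -/
noncomputable def Fn {A : Type*} [NormedRing A] [StarRing A] [NormedAlgebra ℂ A]
    [StarModule ℂ A] (γ : ℤ → A ≃⋆ₐ[ℂ] A) (χ : A →ₗ[ℂ] ℂ) (ia ib : ℕ → ℤ)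
    (n : ℕ) (x : A) : A :=
  (Real.sqrt ((Finset.Icc (ia n) (ib n)).card) : ℂ)⁻¹ •
    ∑ j ∈ Finset.Icc (ia n) (ib n), (γ j x - χ x • 1)

lemma aux_comm_smul {A : Type*} [NormedRing A] [NormedAlgebra ℂ A]
    (u v : A) (s t : ℂ) :
    (u - s • 1) * (v - t • 1) - (v - t • 1) * (u - s • 1) = u * v - v * u := by
  simp only [sub_mul, mul_sub, smul_mul_assoc, mul_smul_comm, one_mul, mul_one,
    smul_smul, smul_sub, mul_comm s t]
  abel

lemma aux_card_bad (p q l : ℤ) :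
    ((Finset.Icc p q).filter (fun j => l ∉ Finset.Icc (p - j) (q - j))).card ≤ l.natAbs := by
  classical
  have hsub : ((Finset.Icc p q).filter (fun j => l ∉ Finset.Icc (p - j) (q - j)))
      ⊆ Finset.Icc p (p - l - 1) ∪ Finset.Icc (q - l + 1) q := by
    intro j hj
    simp only [Finset.mem_filter, Finset.mem_Icc, not_and, not_le] at hj
    simp only [Finset.mem_union, Finset.mem_Icc]
    omega
  calc _ ≤ (Finset.Icc p (p - l - 1) ∪ Finset.Icc (q - l + 1) q).card :=
        Finset.card_le_card hsub
    _ ≤ (Finset.Icc p (p - l - 1)).card + (Finset.Icc (q - l + 1) q).card :=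
        Finset.card_union_le _ _
    _ ≤ l.natAbs := by
        rw [Int.card_Icc, Int.card_Icc]; omega

theorem Fn_commutator_average_limit
    {A : Type*} [NormedRing A] [StarRing A] [CStarRing A] [NormedAlgebra ℂ A]
    [CompleteSpace A] [StarModule ℂ A]
    (M : ℤ → ℤ → Subalgebra ℂ A)
    (hmono : ∀ a b c d : ℤ, a ≤ b → c ≤ a → b ≤ d → M a b ≤ M c d)
    (hdense : Dense {x : A | ∃ a b : ℤ, a ≤ b ∧ x ∈ M a b})
    (hcomm : ∀ a b c d : ℤ, a ≤ b → c ≤ d → (b < c ∨ d < a) →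
      ∀ x ∈ M a b, ∀ y ∈ M c d, x * y = y * x)
    (γ : ℤ → A ≃⋆ₐ[ℂ] A)
    (hγ0 : ∀ x : A, γ 0 x = x)
    (hγadd : ∀ j k : ℤ, ∀ x : A, γ (j + k) x = γ j (γ k x))
    (hγM : ∀ j a b : ℤ, a ≤ b → ⇑(γ j) '' (M a b : Set A) = (M (a + j) (b + j) : Set A))
    (χ : A →ₗ[ℂ] ℂ)
    (hχ1 : χ 1 = 1)
    (hχpos : ∀ x : A, 0 ≤ χ (star x * x))
    (hχinv : ∀ j : ℤ, ∀ x : A, χ (γ j x) = χ x)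
    (hχmult : ∀ a b c d : ℤ, a ≤ b → c ≤ d → (b < c ∨ d < a) →
      ∀ x ∈ M a b, ∀ y ∈ M c d, χ (x * y) = χ x * χ y)
    (ia ib : ℕ → ℤ)
    (hI : ∀ n : ℕ, ia n ≤ ib n)
    (hImono : ∀ n : ℕ, ia (n + 1) ≤ ia n ∧ ib n ≤ ib (n + 1))
    (hIunion : ∀ k : ℤ, ∃ n : ℕ, ia n ≤ k ∧ k ≤ ib n)
    (x y : A)
    (hx : ∃ a b : ℤ, a ≤ b ∧ x ∈ M a b)
    (hy : ∃ a b : ℤ, a ≤ b ∧ y ∈ M a b) :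
    {l : ℤ | x * γ l y - γ l y * x ≠ 0}.Finite ∧
      Tendsto (fun n : ℕ =>
        ‖(Fn γ χ ia ib n x * Fn γ χ ia ib n y - Fn γ χ ia ib n y * Fn γ χ ia ib n x) -
          ((Finset.Icc (ia n) (ib n)).card : ℂ)⁻¹ •
            ∑ j ∈ Finset.Icc (ia n) (ib n),
              γ j (∑' l : ℤ, (x * γ l y - γ l y * x))‖) atTop (𝓝 0) := by
  classical
  letI : CStarAlgebra A := ⟨⟩
  obtain ⟨a, b, hab, hxa⟩ := hx
  obtain ⟨c, d, hcd, hyc⟩ := hy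
  set cl : ℤ → A := fun l => x * γ l y - γ l y * x with hcl
  set S : Finset ℤ := Finset.Icc (a - d) (b - c) with hSdef
  -- support
  have hsupp : ∀ l ∉ S, cl l = 0 := by
    intro l hl
    rw [hSdef, Finset.mem_Icc, not_and_or, not_le, not_le] at hl
    have hyl : γ l y ∈ M (c + l) (d + l) := by
      have h := hγM l c d hcd
      have h2 : γ l y ∈ (⇑(γ l) '' (M c d : Set A)) := Set.mem_image_of_mem _ hyc
      rw [h] at h2
      exact h2
    have hc := hcomm a b (c + l) (d + l) hab (by omega) (by omega) x hxa (γ l y) hyl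
    show x * γ l y - γ l y * x = 0
    rw [hc, sub_self]
  have hfin : {l : ℤ | x * γ l y - γ l y * x ≠ 0}.Finite := by
    refine Set.Finite.subset S.finite_toSet (fun l hl => ?_)
    by_contra h
    exact hl (hsupp l h)
  refine ⟨hfin, ?_⟩
  have htsum : (∑' l : ℤ, (x * γ l y - γ l y * x)) = ∑ l ∈ S, cl l :=
    tsum_eq_sum (fun l hl => hsupp l hl)
  set C : ℝ := ∑ l ∈ S, (l.natAbs : ℝ) * ‖cl l‖ with hCdef
  -- the key pointwise bound
  have key : ∀ n : ℕ,
      ‖(Fn γ χ ia ib n x * Fn γ χ ia ib n y - Fn γ χ ia ib n y * Fn γ χ ia ib n x) -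
          ((Finset.Icc (ia n) (ib n)).card : ℂ)⁻¹ •
            ∑ j ∈ Finset.Icc (ia n) (ib n),
              γ j (∑' l : ℤ, (x * γ l y - γ l y * x))‖
        ≤ (((Finset.Icc (ia n) (ib n)).card : ℝ))⁻¹ * C := by
    intro n
    set I : Finset ℤ := Finset.Icc (ia n) (ib n) with hIdef
    set N : ℕ := I.card with hNdef
    have hα : ((Real.sqrt (N : ℝ) : ℝ) : ℂ)⁻¹ * ((Real.sqrt (N : ℝ) : ℝ) : ℂ)⁻¹
        = (N : ℂ)⁻¹ := by
      rw [← mul_inv, ← Complex.ofReal_mul, Real.mul_self_sqrt (Nat.cast_nonneg N)]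
      norm_num
    have hPQ : (∑ j ∈ I, (γ j x - χ x • 1)) * (∑ k ∈ I, (γ k y - χ y • 1)) -
          (∑ k ∈ I, (γ k y - χ y • 1)) * (∑ j ∈ I, (γ j x - χ x • 1))
        = ∑ j ∈ I, γ j (∑ l ∈ Finset.Icc (ia n - j) (ib n - j), cl l) := by
      rw [Finset.sum_mul_sum, Finset.sum_mul_sum,
        Finset.sum_comm (s := I) (t := I)
          (f := fun k j => (γ k y - χ y • 1) * (γ j x - χ x • 1)),
        ← Finset.sum_sub_distrib]
      refine Finset.sum_congr rfl fun j hj => ?_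
      rw [← Finset.sum_sub_distrib]
      have hterm : ∀ k ∈ I,
          (γ j x - χ x • 1) * (γ k y - χ y • 1) - (γ k y - χ y • 1) * (γ j x - χ x • 1)
            = γ j (cl (k - j)) := by
        intro k hk
        rw [aux_comm_smul]
        have hk' : γ k y = γ j (γ (k - j) y) := by
          have he : j + (k - j) = k := by omega
          have h := hγadd j (k - j) y
          rw [he] at h
          exact h
        rw [hk', hcl]
        simp only [map_sub, map_mul]
      rw [Finset.sum_congr rfl hterm, ← map_sum]
      congr 1
      rw [show (ia n - j) = ia n + -j by ring, show (ib n - j) = ib n + -j by ring,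
        ← Finset.map_add_right_Icc, Finset.sum_map]
      rw [hIdef]
      exact Finset.sum_congr rfl fun k _ => by
        simp [addRightEmbedding_apply, sub_eq_add_neg]
    have hFn : Fn γ χ ia ib n x * Fn γ χ ia ib n y - Fn γ χ ia ib n y * Fn γ χ ia ib n x
        = (N : ℂ)⁻¹ • ∑ j ∈ I, γ j (∑ l ∈ Finset.Icc (ia n - j) (ib n - j), cl l) := by
      simp only [Fn, ← hIdef, ← hNdef]
      rw [smul_mul_smul_comm, smul_mul_smul_comm, ← smul_sub, hα, hPQ]
    have hdiff : ∀ j : ℤ,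
        (∑ l ∈ Finset.Icc (ia n - j) (ib n - j), cl l) - (∑ l ∈ S, cl l)
          = -(∑ l ∈ S \ Finset.Icc (ia n - j) (ib n - j), cl l) := by
      intro j
      have h1 : ∑ l ∈ Finset.Icc (ia n - j) (ib n - j), cl l
          = ∑ l ∈ S ∩ Finset.Icc (ia n - j) (ib n - j), cl l := by
        refine (Finset.sum_subset Finset.inter_subset_right ?_).symm
        intro l hl hls
        exact hsupp l (fun hS => hls (Finset.mem_inter.mpr ⟨hS, hl⟩))
      rw [h1, ← Finset.sum_inter_add_sum_sdiff S (Finset.Icc (ia n - j) (ib n - j)) cl]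
      abel
    rw [hFn, htsum, ← smul_sub, ← Finset.sum_sub_distrib, norm_smul]
    have hNnorm : ‖((N : ℕ) : ℂ)⁻¹‖ = ((N : ℕ) : ℝ)⁻¹ := by
      rw [norm_inv]
      simp
    rw [hNnorm]
    refine mul_le_mul_of_nonneg_left ?_ (by positivity)
    calc ‖∑ j ∈ I, (γ j (∑ l ∈ Finset.Icc (ia n - j) (ib n - j), cl l)
              - γ j (∑ l ∈ S, cl l))‖
        ≤ ∑ j ∈ I, ‖γ j (∑ l ∈ Finset.Icc (ia n - j) (ib n - j), cl l)
              - γ j (∑ l ∈ S, cl l)‖ := norm_sum_le _ _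
      _ = ∑ j ∈ I, ‖∑ l ∈ S \ Finset.Icc (ia n - j) (ib n - j), cl l‖ := by
          refine Finset.sum_congr rfl fun j hj => ?_
          rw [← map_sub, hdiff j, map_neg, norm_neg, StarAlgEquiv.norm_map]
      _ ≤ ∑ j ∈ I, ∑ l ∈ S \ Finset.Icc (ia n - j) (ib n - j), ‖cl l‖ :=
          Finset.sum_le_sum fun j _ => norm_sum_le _ _
      _ = ∑ j ∈ I, ∑ l ∈ S, if l ∉ Finset.Icc (ia n - j) (ib n - j) then ‖cl l‖ else 0 := by
          refine Finset.sum_congr rfl fun j _ => ?_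
          rw [Finset.sdiff_eq_filter, Finset.sum_filter]
      _ = ∑ l ∈ S, ∑ j ∈ I, if l ∉ Finset.Icc (ia n - j) (ib n - j) then ‖cl l‖ else 0 :=
          Finset.sum_comm
      _ ≤ ∑ l ∈ S, (l.natAbs : ℝ) * ‖cl l‖ := by
          refine Finset.sum_le_sum fun l _ => ?_
          rw [← Finset.sum_filter, Finset.sum_const, nsmul_eq_mul]
          refine mul_le_mul_of_nonneg_right ?_ (norm_nonneg _)
          exact_mod_cast aux_card_bad (ia n) (ib n) l
      _ = C := rfl
  -- the cardinalities tend to infinity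
  have hiam : ∀ m n : ℕ, m ≤ n → ia n ≤ ia m :=
    fun m n h => antitone_nat_of_succ_le (fun k => (hImono k).1) h
  have hibm : ∀ m n : ℕ, m ≤ n → ib m ≤ ib n :=
    fun m n h => monotone_nat_of_le_succ (fun k => (hImono k).2) h
  have hNtop : Tendsto (fun n : ℕ => (Finset.Icc (ia n) (ib n)).card) atTop atTop := by
    rw [tendsto_atTop_atTop]
    intro K
    obtain ⟨n₀, hn₀⟩ := hIunion (-(K : ℤ))
    obtain ⟨n₁, hn₁⟩ := hIunion (K : ℤ)
    refine ⟨max n₀ n₁, fun n hn => ?_⟩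
    have h1 : ia n ≤ -(K : ℤ) :=
      le_trans (hiam n₀ n (le_trans (le_max_left _ _) hn)) hn₀.1
    have h2 : (K : ℤ) ≤ ib n :=
      le_trans hn₁.2 (hibm n₁ n (le_trans (le_max_right _ _) hn))
    rw [Int.card_Icc]
    omega
  have hlim : Tendsto
      (fun n : ℕ => (((Finset.Icc (ia n) (ib n)).card : ℝ))⁻¹ * C) atTop (𝓝 0) := by
    have h1 : Tendsto (fun n : ℕ => (((Finset.Icc (ia n) (ib n)).card : ℝ))⁻¹)
        atTop (𝓝 0) :=
      tendsto_inv_atTop_zero.comp (tendsto_natCast_atTop_atTop.comp hNtop)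
    simpa using h1.mul_const C
  exact squeeze_zero (fun n => norm_nonneg _) key hlim
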